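/- In an updown category C, the up operator U and the down operator D on the free vector space k(Ob C) are adjoint with respect to the inner product defined by ⟨p,p'⟩ = |Aut(p)| if p' = p and 0 otherwise. -/

import Mathlib

structure UDData where
  Obj : Type
  Hom : Obj → Obj → Type
  idm : ∀ p, Hom p p
  comp : ∀ {p q r : Obj}, Hom p q → Hom q r → Hom p r
  idm_comp : ∀ {p q : Obj} (f : Hom p q), comp (idm p) f = f
  comp_idm : ∀ {p q : Obj} (f : Hom p q), comp f (idm q) = f
  comp_assoc : ∀ {p q r s : Obj} (f : Hom p q) (g : Hom q r) (h : Hom r s),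
    comp (comp f g) h = comp f (comp g h)
  rank : Obj → ℕ
  zhat : Obj

namespace UDData

def cast {C : UDData} {p q q' : C.Obj} (h : q = q') (f : C.Hom p q) : C.Hom p q' := h ▸ f

def Chain (C : UDData) : ℕ → C.Obj → C.Obj → Type
  | 0, p, q => PLift (p = q)
  | n + 1, p, q => (r : C.Obj) × C.Chain n p r × {f : C.Hom r q // C.rank q = C.rank r + 1}

structure IsUpdown (C : UDData) : Prop where
  rank_finite : ∀ n : ℕ, {p : C.Obj | C.rank p = n}.Finite
  hom_finite : ∀ p q : C.Obj, Finite (C.Hom p q)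
  rank_zhat : C.rank C.zhat = 0
  zhat_unique : ∀ p : C.Obj, C.rank p = 0 → p = C.zhat
  from_zhat : ∀ p : C.Obj, Nonempty (C.Hom C.zhat p)
  hom_rank : ∀ p q : C.Obj, Nonempty (C.Hom p q) → C.rank p < C.rank q ∨ p = q
  aut_inv : ∀ (p : C.Obj) (f : C.Hom p p),
    ∃ g : C.Hom p p, C.comp f g = C.idm p ∧ C.comp g f = C.idm p
  factor : ∀ {p q : C.Obj} (f : C.Hom p q), C.rank p < C.rank q →
    ∃ (r : C.Obj) (g : C.Hom p r) (h : C.Hom r q),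
      C.rank r = C.rank p + 1 ∧ C.comp g h = f
  pre_free : ∀ {p q : C.Obj}, C.rank q = C.rank p + 1 → ∀ (a : C.Hom p p) (f : C.Hom p q),
    C.comp a f = f → a = C.idm p
  post_free : ∀ {p q : C.Obj}, C.rank q = C.rank p + 1 → ∀ (b : C.Hom q q) (f : C.Hom p q),
    C.comp f b = f → b = C.idm q

variable (C : UDData)

noncomputable def nAut (p : C.Obj) : ℕ := Nat.card (C.Hom p p)

noncomputable def u (p q : C.Obj) : ℕ := Nat.card (C.Hom p q) / C.nAut q

noncomputable def d (p q : C.Obj) : ℕ := Nat.card (C.Hom p q) / C.nAut p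

noncomputable def uStep (p q : C.Obj) : ℕ := if C.rank q = C.rank p + 1 then C.u p q else 0

noncomputable def dStep (p q : C.Obj) : ℕ := if C.rank q = C.rank p + 1 then C.d p q else 0

open Classical in
noncomputable def uext (C : UDData) : ℕ → C.Obj → C.Obj → ℕ
  | 0, p, q => if p = q then 1 else 0
  | n + 1, p, q => ∑ᶠ r : C.Obj, C.uext n p r * C.uStep r q

open Classical in
noncomputable def dext (C : UDData) : ℕ → C.Obj → C.Obj → ℕ
  | 0, p, q => if p = q then 1 else 0
  | n + 1, p, q => ∑ᶠ r : C.Obj, C.dext n p r * C.dStep r q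

noncomputable def uE (p q : C.Obj) : ℕ := C.uext (C.rank q - C.rank p) p q

noncomputable def dE (p q : C.Obj) : ℕ := C.dext (C.rank q - C.rank p) p q

def Univalent (C : UDData) : Prop := ∀ p : C.Obj, Subsingleton (C.Hom p p)

def Simple (C : UDData) : Prop :=
  (∀ p q : C.Obj, Subsingleton (C.Hom p q)) ∧
    ∀ (n : ℕ) (p q : C.Obj), Subsingleton (C.Chain n p q)

def EUC (C : UDData) (u : ℕ → ℕ) : Prop :=
  ∀ p : C.Obj, (∑ᶠ q : C.Obj, C.uStep p q) = u (C.rank p)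

def EDC (C : UDData) (d : ℕ → ℕ) : Prop :=
  ∀ p : C.Obj, (∑ᶠ q : C.Obj, C.dStep q p) = d (C.rank p)

def Factorial (C : UDData) : Prop :=
  ∀ p : C.Obj, (∑ᶠ q : C.Obj, C.dStep q p) = C.rank p

def prod (C D : UDData) : UDData where
  Obj := C.Obj × D.Obj
  Hom := fun p q => C.Hom p.1 q.1 × D.Hom p.2 q.2
  idm := fun p => (C.idm p.1, D.idm p.2)
  comp := fun f g => (C.comp f.1 g.1, D.comp f.2 g.2)
  idm_comp := by intro p q f; cases f; simp [C.idm_comp, D.idm_comp]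
  comp_idm := by intro p q f; cases f; simp [C.comp_idm, D.comp_idm]
  comp_assoc := by intro p q r s f g h; simp [C.comp_assoc, D.comp_assoc]
  rank := fun p => C.rank p.1 + D.rank p.2
  zhat := (C.zhat, D.zhat)

structure Mor (C D : UDData) where
  obj : C.Obj → D.Obj
  map : ∀ {p q : C.Obj}, C.Hom p q → D.Hom (obj p) (obj q)
  map_idm : ∀ p : C.Obj, map (C.idm p) = D.idm (obj p)
  map_comp : ∀ {p q r : C.Obj} (f : C.Hom p q) (g : C.Hom q r),
    map (C.comp f g) = D.comp (map f) (map g)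
  rank_eq : ∀ p : C.Obj, D.rank (obj p) = C.rank p

def Mor.comp {C D E : UDData} (F : Mor C D) (G : Mor D E) : Mor C E where
  obj := fun p => G.obj (F.obj p)
  map := fun f => G.map (F.map f)
  map_idm := by intro p; show G.map (F.map (C.idm p)) = _; rw [F.map_idm, G.map_idm]
  map_comp := by
    intro p q r f g
    show G.map (F.map (C.comp f g)) = E.comp (G.map (F.map f)) (G.map (F.map g))
    rw [F.map_comp, G.map_comp]
  rank_eq := by intro p; rw [G.rank_eq, F.rank_eq]

structure Mor.IsGood {C D : UDData} (F : Mor C D) : Prop where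
  aut_inj : ∀ p : C.Obj, Function.Injective fun a : C.Hom p p => F.map a
  pre_quot_inj : ∀ {p q₁ q₂ : C.Obj} (f₁ : C.Hom p q₁) (f₂ : C.Hom p q₂),
    C.rank q₁ = C.rank p + 1 → C.rank q₂ = C.rank p + 1 →
    ∀ h : F.obj q₁ = F.obj q₂,
      (∃ a : D.Hom (F.obj p) (F.obj p),
        D.comp a (UDData.cast h (F.map f₁)) = F.map f₂) →
      ∃ e : q₁ = q₂, ∃ a : C.Hom p p, C.comp a (UDData.cast e f₁) = f₂
  post_quot_inj : ∀ {p q₁ q₂ : C.Obj} (f₁ : C.Hom p q₁) (f₂ : C.Hom p q₂),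
    C.rank q₁ = C.rank p + 1 → C.rank q₂ = C.rank p + 1 →
    ∀ h : F.obj q₁ = F.obj q₂,
      (∃ b : D.Hom (F.obj q₂) (F.obj q₂),
        D.comp (UDData.cast h (F.map f₁)) b = F.map f₂) →
      ∃ e : q₁ = q₂, ∃ b : C.Hom q₂ q₂, C.comp (UDData.cast e f₁) b = f₂

def Mor.IsCovering {C' C : UDData} (F : Mor C' C) : Prop :=
  Function.Surjective F.obj ∧
    ∀ p q : C'.Obj, C'.rank q = C'.rank p + 1 →
      Function.Bijective fun x : (q' : {q' : C'.Obj // F.obj q' = F.obj q}) × C'.Hom p q'.1 =>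
        UDData.cast x.1.2 (F.map x.2)

noncomputable def objCoeff (n : ℕ) : ℚ :=
  ∑ᶠ p : C.Obj, if C.rank p = n then ((C.nAut p : ℚ))⁻¹ else 0

noncomputable def objGF : PowerSeries ℚ := PowerSeries.mk C.objCoeff

noncomputable def morGF : PowerSeries ℚ :=
  PowerSeries.mk fun n =>
    ∑ᶠ p : C.Obj, ∑ᶠ q : C.Obj,
      if C.rank p + C.rank q = n then (C.uStep p q : ℚ) * ((C.nAut p : ℚ))⁻¹ else 0

noncomputable def sqSub (f : PowerSeries ℚ) : PowerSeries ℚ :=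
  PowerSeries.mk fun n => if 2 ∣ n then PowerSeries.coeff (R := ℚ) (n / 2) f else 0

noncomputable def coverCard (n : ℕ) : ℕ := Nat.card ((q : C.Obj) × C.Chain n C.zhat q)

noncomputable def inprod (f g : C.Obj → ℚ) : ℚ := ∑ᶠ p : C.Obj, f p * g p * C.nAut p

noncomputable def Uop (f : C.Obj → ℚ) : C.Obj → ℚ := fun q => ∑ᶠ p : C.Obj, f p * C.uStep p q

noncomputable def Dop (f : C.Obj → ℚ) : C.Obj → ℚ := fun p => ∑ᶠ q : C.Obj, f q * C.dStep p q

end UDData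


open MulAction in
private lemma card_dvd_of_free {G X : Type} [Group G] [MulAction G X] [Finite G] [Finite X]
    (hfree : ∀ (g : G) (x : X), g • x = x → g = 1) : Nat.card G ∣ Nat.card X := by
  classical
  cases nonempty_fintype X
  cases nonempty_fintype G
  have horb : ∀ x : X, Nat.card (orbit G x) = Nat.card G := by
    intro x
    have hstab : stabilizer G x = ⊥ := by
      ext g
      simp only [mem_stabilizer_iff, Subgroup.mem_bot]
      exact ⟨fun hg => hfree g x hg, fun hg => by simp [hg]⟩
    calc Nat.card (orbit G x) = Nat.card (G ⧸ stabilizer G x) :=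
          Nat.card_congr (orbitEquivQuotientStabilizer G x)
      _ = Nat.card G := by rw [hstab]; exact Nat.card_congr (QuotientGroup.quotientBot (G := G)).toEquiv
  have e := selfEquivSigmaOrbits G X
  have : Nat.card X = Nat.card (orbitRel.Quotient G X) * Nat.card G := by
    rw [Nat.card_congr e, Nat.card_eq_fintype_card, Fintype.card_sigma]
    have hc : ∀ ω : orbitRel.Quotient G X, Fintype.card (orbit G (ω.out : X)) = Nat.card G :=
      fun ω => by rw [← Nat.card_eq_fintype_card, horb]
    simp [hc, Finset.sum_const, Nat.card_eq_fintype_card]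
  exact ⟨_, by rw [this, Nat.mul_comm]⟩


private lemma nAut_pos (C : UDData) (h : C.IsUpdown) (p : C.Obj) : 0 < C.nAut p := by
  haveI := h.hom_finite p p
  exact Nat.card_pos_iff.mpr ⟨⟨C.idm p⟩, inferInstance⟩

private lemma nAut_dvd_right (C : UDData) (h : C.IsUpdown) {p q : C.Obj}
    (hr : C.rank q = C.rank p + 1) : C.nAut q ∣ Nat.card (C.Hom p q) := by
  haveI := h.hom_finite p q
  haveI := h.hom_finite q q
  letI : Group (C.Hom q q) :=
    { mul := fun a b => C.comp b a
      one := C.idm q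
      inv := fun a => Classical.choose (h.aut_inv q a)
      mul_assoc := fun a b c => (C.comp_assoc c b a).symm
      one_mul := fun a => C.comp_idm a
      mul_one := fun a => C.idm_comp a
      inv_mul_cancel := fun a => (Classical.choose_spec (h.aut_inv q a)).1 }
  letI : MulAction (C.Hom q q) (C.Hom p q) :=
    { smul := fun b f => C.comp f b
      one_smul := fun f => C.comp_idm f
      mul_smul := fun a b f => (C.comp_assoc f b a).symm }
  exact card_dvd_of_free (fun b f hb => h.post_free hr b f hb)

private lemma nAut_dvd_left (C : UDData) (h : C.IsUpdown) {p q : C.Obj}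
    (hr : C.rank q = C.rank p + 1) : C.nAut p ∣ Nat.card (C.Hom p q) := by
  haveI := h.hom_finite p q
  haveI := h.hom_finite p p
  letI : Group (C.Hom p p) :=
    { mul := fun a b => C.comp a b
      one := C.idm p
      inv := fun a => Classical.choose (h.aut_inv p a)
      mul_assoc := fun a b c => C.comp_assoc a b c
      one_mul := fun a => C.idm_comp a
      mul_one := fun a => C.comp_idm a
      inv_mul_cancel := fun a => (Classical.choose_spec (h.aut_inv p a)).2 }
  letI : MulAction (C.Hom p p) (C.Hom p q) :=
    { smul := fun a f => C.comp a f
      one_smul := fun f => C.idm_comp f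
      mul_smul := fun a b f => C.comp_assoc a b f }
  exact card_dvd_of_free (fun a f ha => h.pre_free hr a f ha)

private lemma key_adj (C : UDData) (h : C.IsUpdown) (p q : C.Obj) :
    (C.uStep p q : ℚ) * C.nAut q = (C.dStep p q : ℚ) * C.nAut p := by
  unfold UDData.uStep UDData.dStep
  by_cases hr : C.rank q = C.rank p + 1
  · simp only [hr, if_pos]
    have h1 : C.u p q * C.nAut q = Nat.card (C.Hom p q) :=
      Nat.div_mul_cancel (nAut_dvd_right C h hr)
    have h2 : C.d p q * C.nAut p = Nat.card (C.Hom p q) :=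
      Nat.div_mul_cancel (nAut_dvd_left C h hr)
    have : C.u p q * C.nAut q = C.d p q * C.nAut p := h1.trans h2.symm
    exact_mod_cast congrArg (Nat.cast : ℕ → ℚ) this
  · simp [hr]

theorem updown_U_D_adjoint (C : UDData) (h : C.IsUpdown) (f g : C.Obj → ℚ)
    (hf : (Function.support f).Finite) (hg : (Function.support g).Finite) :
    C.inprod (C.Uop f) g = C.inprod f (C.Dop g) := by
  classical
  set S := hf.toFinset with hS
  set T := hg.toFinset with hT
  have hUop : ∀ q : C.Obj, C.Uop f q = ∑ p ∈ S, f p * C.uStep p q := by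
    intro q
    refine finsum_eq_finset_sum_of_support_subset _ ?_
    intro p hp
    simp only [Function.mem_support] at hp
    have : f p ≠ 0 := fun h0 => hp (by simp [h0])
    simpa [hS] using this
  have hDop : ∀ p : C.Obj, C.Dop g p = ∑ q ∈ T, g q * C.dStep p q := by
    intro p
    refine finsum_eq_finset_sum_of_support_subset _ ?_
    intro q hq
    simp only [Function.mem_support] at hq
    have : g q ≠ 0 := fun h0 => hq (by simp [h0])
    simpa [hT] using this
  have hL : C.inprod (C.Uop f) g = ∑ q ∈ T, C.Uop f q * g q * C.nAut q := by
    refine finsum_eq_finset_sum_of_support_subset _ ?_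
    intro q hq
    simp only [Function.mem_support] at hq
    have : g q ≠ 0 := fun h0 => hq (by simp [h0])
    simpa [hT] using this
  have hR : C.inprod f (C.Dop g) = ∑ p ∈ S, f p * C.Dop g p * C.nAut p := by
    refine finsum_eq_finset_sum_of_support_subset _ ?_
    intro p hp
    simp only [Function.mem_support] at hp
    have : f p ≠ 0 := fun h0 => hp (by simp [h0])
    simpa [hS] using this
  rw [hL, hR]
  calc (∑ q ∈ T, C.Uop f q * g q * C.nAut q)
      = ∑ q ∈ T, ∑ p ∈ S, f p * C.uStep p q * g q * C.nAut q := by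
        refine Finset.sum_congr rfl fun q _ => ?_
        rw [hUop q, Finset.sum_mul, Finset.sum_mul]
    _ = ∑ p ∈ S, ∑ q ∈ T, f p * C.uStep p q * g q * C.nAut q := Finset.sum_comm
    _ = ∑ p ∈ S, ∑ q ∈ T, f p * (g q * C.dStep p q) * C.nAut p := by
        refine Finset.sum_congr rfl fun p _ => Finset.sum_congr rfl fun q _ => ?_
        have := key_adj C h p q
        linear_combination (f p * g q) * this
    _ = ∑ p ∈ S, f p * C.Dop g p * C.nAut p := by
        refine Finset.sum_congr rfl fun p _ => ?_
        rw [hDop p, Finset.mul_sum, Finset.sum_mul]
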